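/- Let b ∈ {0,1} and μ₁, μ₂ be random probability pairs, each having a symmetric density with respect to b (b uniform), and suppose b → μ₁ → μ₂ is a Markov chain (μ₂ is conditionally independent of b given μ₁). Write qᵢ = μᵢ(0). Then E[(q₁ − q₂)²] ≤ (ln 2 / 2)·( I(𝖽μ₁) − I(𝖽μ₂) ), where I(𝖽μᵢ) = 1 − E[H₂(qᵢ)] is the mutual-information functional of the density. -/

import Mathlib

open scoped Classical

/-- Probability of an event on a finite space with weights p. -/
noncomputable def pr {Ω : Type} [Fintype Ω] (p : Ω → ℝ) (A : Ω → Prop) : ℝ :=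
  ∑ ω, if A ω then p ω else 0

/-- Binary entropy function (base 2). -/
noncomputable def binEnt (p : ℝ) : ℝ :=
  -(p * Real.logb 2 p) - (1 - p) * Real.logb 2 (1 - p)

section Aux

/-- derivative helper -/
private lemma phi_hasDeriv (a : ℝ) {q : ℝ} (hq0 : q ≠ 0) (hq1 : q ≠ 1) :
    HasDerivAt (fun x => -(x * Real.log a) - (1 - x) * Real.log (1 - a)
        - Real.binEntropy x - 2 * (x - a) ^ 2)
      (Real.log (1 - a) - Real.log a - (Real.log (1 - q) - Real.log q) - 4 * (q - a)) q := by
  have h1 : HasDerivAt (fun x : ℝ => -(x * Real.log a)) (-Real.log a) q := by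
    exact (((hasDerivAt_id' q).mul_const (Real.log a)).neg).congr_deriv (by ring)
  have h2 : HasDerivAt (fun x : ℝ => (1 - x) * Real.log (1 - a)) (-Real.log (1 - a)) q := by
    simpa using (((hasDerivAt_id q).const_sub 1).mul_const (Real.log (1 - a)))
  have h3 := Real.hasDerivAt_binEntropy hq0 hq1
  have h4 : HasDerivAt (fun x : ℝ => 2 * (x - a) ^ 2) (4 * (q - a)) q := by
    have := (((hasDerivAt_id q).sub_const a).pow 2).const_mul (2 : ℝ)
    simpa using this.congr_deriv (by simp only [id]; ring)
  have := ((h1.sub h2).sub h3).sub h4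
  exact this.congr_deriv (by ring)

private lemma psi_hasDeriv (a : ℝ) {q : ℝ} (hq0 : q ≠ 0) (hq1 : q ≠ 1) :
    HasDerivAt (fun x => Real.log (1 - a) - Real.log a - (Real.log (1 - x) - Real.log x) - 4 * (x - a))
      (1 / q + 1 / (1 - q) - 4) q := by
  have h1 : HasDerivAt (fun x : ℝ => Real.log (1 - x)) (-(1 - q)⁻¹) q := by
    have := (Real.hasDerivAt_log (by simpa [sub_ne_zero] using (Ne.symm hq1))).comp q
      ((hasDerivAt_id q).const_sub 1)
    exact this.congr_deriv (by simp only [id]; ring)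
  have h2 : HasDerivAt (fun x : ℝ => Real.log x) q⁻¹ q := Real.hasDerivAt_log hq0
  have h4 : HasDerivAt (fun x : ℝ => 4 * (x - a)) 4 q := by
    simpa using ((hasDerivAt_id q).sub_const a).const_mul (4 : ℝ)
  have := (((hasDerivAt_const q (Real.log (1 - a) - Real.log a)).sub (h1.sub h2))).sub h4
  exact this.congr_deriv (by ring)

/-- Binary Pinsker / tangent-line inequality. -/
private lemma pinsker {a q : ℝ} (ha0 : 0 < a) (ha1 : a < 1) (hq0 : 0 ≤ q) (hq1 : q ≤ 1) :
    2 * (q - a) ^ 2 + Real.binEntropy q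
      ≤ -(q * Real.log a) - (1 - q) * Real.log (1 - a) := by
  set ψ : ℝ → ℝ := fun x => Real.log (1 - a) - Real.log a - (Real.log (1 - x) - Real.log x)
      - 4 * (x - a) with hψ
  set φ : ℝ → ℝ := fun x => -(x * Real.log a) - (1 - x) * Real.log (1 - a)
      - Real.binEntropy x - 2 * (x - a) ^ 2 with hφ
  have hψmono : MonotoneOn ψ (Set.Ioo (0:ℝ) 1) := by
    apply monotoneOn_of_hasDerivWithinAt_nonneg (f' := fun x => 1 / x + 1 / (1 - x) - 4)
      (convex_Ioo 0 1)
    · intro x hx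
      exact ((psi_hasDeriv a (ne_of_gt hx.1) (ne_of_lt hx.2)).continuousAt).continuousWithinAt
    · intro x hx
      rw [interior_Ioo] at hx
      exact (psi_hasDeriv a (ne_of_gt hx.1) (ne_of_lt hx.2)).hasDerivWithinAt
    · intro x hx
      rw [interior_Ioo] at hx
      obtain ⟨hx0, hx1⟩ := hx
      have h1 : 0 < x * (1 - x) := mul_pos hx0 (by linarith)
      rw [div_add_div _ _ (ne_of_gt hx0) (by linarith : (1:ℝ) - x ≠ 0)]
      rw [sub_nonneg, ← sub_nonneg]
      have key : (1 - x + x) / (x * (1 - x)) - 4 = (1 - 2*x)^2 / (x * (1 - x)) := by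
        field_simp
        ring
      have : (0:ℝ) ≤ (1 - 2*x)^2 / (x * (1 - x)) := div_nonneg (sq_nonneg _) h1.le
      calc (0:ℝ) ≤ (1 - 2*x)^2 / (x * (1 - x)) := this
        _ = _ := by rw [← key]; ring_nf
  have hψa : ψ a = 0 := by simp [hψ]
  have hφcont : Continuous φ := by
    apply Continuous.sub
    apply Continuous.sub
    apply Continuous.sub
    · exact (continuous_id.mul continuous_const).neg
    · exact (continuous_const.sub continuous_id).mul continuous_const
    · exact Real.binEntropy_continuous
    · exact (continuous_const.mul (((continuous_id.sub continuous_const).pow 2)))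
  have hφa : φ a = 0 := by
    simp only [hφ, Real.binEntropy]
    rw [Real.log_inv, Real.log_inv]
    ring
  have hmono : MonotoneOn φ (Set.Icc a 1) := by
    apply monotoneOn_of_hasDerivWithinAt_nonneg (f' := ψ) (convex_Icc a 1)
      hφcont.continuousOn
    · intro x hx
      rw [interior_Icc] at hx
      exact (phi_hasDeriv a (by linarith [hx.1] : x ≠ 0) (ne_of_lt hx.2)).hasDerivWithinAt
    · intro x hx
      rw [interior_Icc] at hx
      rw [← hψa]
      exact hψmono ⟨ha0, ha1⟩ ⟨by linarith [hx.1], hx.2⟩ hx.1.le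
  have hanti : AntitoneOn φ (Set.Icc 0 a) := by
    apply antitoneOn_of_hasDerivWithinAt_nonpos (f' := ψ) (convex_Icc 0 a)
      hφcont.continuousOn
    · intro x hx
      rw [interior_Icc] at hx
      exact (phi_hasDeriv a (ne_of_gt hx.1) (by linarith [hx.2] : x ≠ 1)).hasDerivWithinAt
    · intro x hx
      rw [interior_Icc] at hx
      rw [← hψa]
      exact hψmono ⟨hx.1, by linarith [hx.2]⟩ ⟨ha0, ha1⟩ hx.2.le
  have hq : 0 ≤ φ q := by
    rcases le_total q a with h | h
    · rw [← hφa]; exact hanti ⟨hq0, h⟩ ⟨hq0.trans h, le_refl a⟩ h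
    · rw [← hφa]; exact hmono ⟨le_refl a, ha1.le⟩ ⟨h, hq1⟩ h
  simp only [hφ] at hq
  linarith

/-- Grouped Jensen-type step. -/
private lemma grouped {Ω : Type} (T : Finset Ω) (w q : Ω → ℝ) (a : ℝ)
    (hw : ∀ ω ∈ T, 0 ≤ w ω) (hq0 : ∀ ω ∈ T, 0 ≤ q ω) (hq1 : ∀ ω ∈ T, q ω ≤ 1)
    (ha0 : 0 ≤ a) (ha1 : a ≤ 1)
    (hmean : ∑ ω ∈ T, w ω * q ω = a * ∑ ω ∈ T, w ω) :
    ∑ ω ∈ T, w ω * (2 * (q ω - a) ^ 2 + Real.binEntropy (q ω))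
      ≤ (∑ ω ∈ T, w ω) * Real.binEntropy a := by
  rcases eq_or_lt_of_le ha0 with h0 | h0
  · have hz : ∑ ω ∈ T, w ω * q ω = 0 := by rw [hmean, ← h0]; ring
    have hall : ∀ ω ∈ T, w ω * q ω = 0 := by
      intro ω hω
      exact (Finset.sum_eq_zero_iff_of_nonneg
        (fun i hi => mul_nonneg (hw i hi) (hq0 i hi))).1 hz ω hω
    have : ∀ ω ∈ T, w ω * (2 * (q ω - a) ^ 2 + Real.binEntropy (q ω)) = 0 := by
      intro ω hω
      rcases mul_eq_zero.1 (hall ω hω) with h | h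
      · simp [h]
      · simp [h, ← h0]
    rw [Finset.sum_congr rfl this]
    simp [← h0]
  rcases eq_or_lt_of_le ha1 with h1 | h1
  · have hz : ∑ ω ∈ T, w ω * (1 - q ω) = 0 := by
      have e : ∑ ω ∈ T, w ω * (1 - q ω) = (∑ ω ∈ T, w ω) - ∑ ω ∈ T, w ω * q ω := by
        rw [← Finset.sum_sub_distrib]; congr 1; ext ω; ring
      rw [e, hmean, h1]; ring
    have hall : ∀ ω ∈ T, w ω * (1 - q ω) = 0 := by
      intro ω hω
      exact (Finset.sum_eq_zero_iff_of_nonneg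
        (fun i hi => mul_nonneg (hw i hi) (by linarith [hq1 i hi]))).1 hz ω hω
    have : ∀ ω ∈ T, w ω * (2 * (q ω - a) ^ 2 + Real.binEntropy (q ω)) = 0 := by
      intro ω hω
      rcases mul_eq_zero.1 (hall ω hω) with h | h
      · simp [h]
      · have : q ω = 1 := by linarith [sub_eq_zero.1 h]
        simp [this, h1]
    rw [Finset.sum_congr rfl this]
    simp [h1]
  have key : ∀ ω ∈ T, w ω * (2 * (q ω - a) ^ 2 + Real.binEntropy (q ω))
      ≤ w ω * (-(q ω * Real.log a) - (1 - q ω) * Real.log (1 - a)) := by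
    intro ω hω
    exact mul_le_mul_of_nonneg_left (pinsker h0 h1 (hq0 ω hω) (hq1 ω hω)) (hw ω hω)
  calc ∑ ω ∈ T, w ω * (2 * (q ω - a) ^ 2 + Real.binEntropy (q ω))
      ≤ ∑ ω ∈ T, w ω * (-(q ω * Real.log a) - (1 - q ω) * Real.log (1 - a)) :=
        Finset.sum_le_sum key
    _ = -Real.log a * (∑ ω ∈ T, w ω * q ω)
        - Real.log (1 - a) * (∑ ω ∈ T, (w ω - w ω * q ω)) := by
        rw [Finset.mul_sum, Finset.mul_sum, ← Finset.sum_sub_distrib]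
        congr 1; ext ω; ring
    _ = -Real.log a * (∑ ω ∈ T, w ω * q ω)
        - Real.log (1 - a) * ((∑ ω ∈ T, w ω) - ∑ ω ∈ T, w ω * q ω) := by
        rw [Finset.sum_sub_distrib]
    _ = (∑ ω ∈ T, w ω) * (-(a * Real.log a) - (1 - a) * Real.log (1 - a)) := by
        rw [hmean]; ring
    _ = (∑ ω ∈ T, w ω) * Real.binEntropy a := by
        rw [Real.binEntropy, Real.log_inv, Real.log_inv]; ring

end Aux

/-- If b is uniform binary, μ₁ and μ₂ are random probability pairs with
symmetric densities w.r.t. b, and b → μ₁ → μ₂ is a Markov chain, then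
E[(q₁ − q₂)²] ≤ (ln 2/2)·(I(𝖽μ₁) − I(𝖽μ₂)) where qᵢ = μᵢ(0) and
I(𝖽μᵢ) = 1 − E[H₂(qᵢ)]. -/
theorem stmt10 {Ω : Type} [Fintype Ω] (p : Ω → ℝ) (hp : ∀ ω, 0 ≤ p ω)
    (hsum : ∑ ω, p ω = 1)
    (b : Ω → ZMod 2) (μ₁ μ₂ : Ω → ZMod 2 → ℝ)
    (hμ₁0 : ∀ ω c, 0 ≤ μ₁ ω c) (hμ₁1 : ∀ ω, μ₁ ω 0 + μ₁ ω 1 = 1)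
    (hμ₂0 : ∀ ω c, 0 ≤ μ₂ ω c) (hμ₂1 : ∀ ω, μ₂ ω 0 + μ₂ ω 1 = 1)
    (hb : ∀ c : ZMod 2, pr p (fun ω => b ω = c) = 1 / 2)
    (hsym₁ : ∀ (l : ZMod 2 → ℝ) (c : ZMod 2),
      pr p (fun ω => μ₁ ω = l ∧ b ω = c) = l c * pr p (fun ω => μ₁ ω = l))
    (hsym₂ : ∀ (l : ZMod 2 → ℝ) (c : ZMod 2),
      pr p (fun ω => μ₂ ω = l ∧ b ω = c) = l c * pr p (fun ω => μ₂ ω = l))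
    (hmarkov : ∀ (l₁ l₂ : ZMod 2 → ℝ) (c : ZMod 2),
      pr p (fun ω => μ₁ ω = l₁ ∧ μ₂ ω = l₂ ∧ b ω = c) * pr p (fun ω => μ₁ ω = l₁)
        = pr p (fun ω => μ₁ ω = l₁ ∧ μ₂ ω = l₂) * pr p (fun ω => μ₁ ω = l₁ ∧ b ω = c)) :
    ∑ ω, p ω * (μ₁ ω 0 - μ₂ ω 0) ^ 2
      ≤ (Real.log 2 / 2) *
        ((1 - ∑ ω, p ω * binEnt (μ₁ ω 0)) - (1 - ∑ ω, p ω * binEnt (μ₂ ω 0))) := by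
  -- basic bounds
  have hq1b : ∀ ω, μ₁ ω 0 ≤ 1 := fun ω => by have h := hμ₁1 ω; have := hμ₁0 ω 1; linarith
  have hq2b : ∀ ω, μ₂ ω 0 ≤ 1 := fun ω => by have h := hμ₂1 ω; have := hμ₂0 ω 1; linarith
  -- pr facts
  have pr_nonneg : ∀ (A : Ω → Prop), 0 ≤ pr p A := by
    intro A; apply Finset.sum_nonneg; intro ω _; split <;> simp [hp ω]
  have pr_and_le : ∀ (A B : Ω → Prop), pr p (fun ω => A ω ∧ B ω) ≤ pr p A := by
    intro A B
    apply Finset.sum_le_sum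
    intro ω _
    by_cases h : A ω ∧ B ω
    · simp [h, h.1]
    · simp only [h, if_false]; split <;> simp [hp ω]
  -- fiberwise decomposition over values of a random pmf
  have fiber : ∀ (ν : Ω → ZMod 2 → ℝ) (f : Ω → ℝ),
      ∑ ω, f ω = ∑ l ∈ Finset.univ.image ν, ∑ ω, (if ν ω = l then f ω else 0) := by
    intro ν f
    have inner : ∀ ω, ∑ l ∈ Finset.univ.image ν, (if ν ω = l then f ω else 0) = f ω := by
      intro ω
      rw [Finset.sum_eq_single_of_mem (ν ω)
        (Finset.mem_image_of_mem ν (Finset.mem_univ ω))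
        (fun l _ hne => if_neg (fun h => hne h.symm))]
      exact if_pos rfl
    calc ∑ ω, f ω = ∑ ω, ∑ l ∈ Finset.univ.image ν, (if ν ω = l then f ω else 0) :=
          Finset.sum_congr rfl (fun ω _ => (inner ω).symm)
      _ = _ := Finset.sum_comm
  -- (†) the Markov consequence
  have hdag : ∀ l₁ l : ZMod 2 → ℝ,
      pr p (fun ω => μ₁ ω = l₁ ∧ μ₂ ω = l ∧ b ω = 0)
        = l₁ 0 * pr p (fun ω => μ₁ ω = l₁ ∧ μ₂ ω = l) := by
    intro l₁ l
    have H := hmarkov l₁ l 0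
    rw [hsym₁ l₁ 0] at H
    by_cases hz : pr p (fun ω => μ₁ ω = l₁) = 0
    · have h1 : pr p (fun ω => μ₁ ω = l₁ ∧ μ₂ ω = l ∧ b ω = 0) = 0 :=
        le_antisymm (le_of_le_of_eq (pr_and_le _ _) hz) (pr_nonneg _)
      have h2 : pr p (fun ω => μ₁ ω = l₁ ∧ μ₂ ω = l) = 0 :=
        le_antisymm (le_of_le_of_eq (pr_and_le _ _) hz) (pr_nonneg _)
      rw [h1, h2]; ring
    · apply mul_right_cancel₀ hz
      rw [H]; ring
  -- (★) conditional mean identity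
  have hmean : ∀ l : ZMod 2 → ℝ,
      ∑ ω, (if μ₂ ω = l then p ω * μ₁ ω 0 else 0)
        = l 0 * ∑ ω, (if μ₂ ω = l then p ω else 0) := by
    intro l
    have step1 : ∑ ω, (if μ₂ ω = l then p ω * μ₁ ω 0 else 0)
        = ∑ l₁ ∈ Finset.univ.image μ₁, l₁ 0 * pr p (fun ω => μ₁ ω = l₁ ∧ μ₂ ω = l) := by
      rw [fiber μ₁ (fun ω => if μ₂ ω = l then p ω * μ₁ ω 0 else 0)]
      apply Finset.sum_congr rfl
      intro l₁ _
      rw [pr, Finset.mul_sum]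
      apply Finset.sum_congr rfl
      intro ω _
      by_cases h1 : μ₁ ω = l₁ <;> by_cases h2 : μ₂ ω = l <;> simp [h1, h2, mul_comm]
    have step2 : ∑ l₁ ∈ Finset.univ.image μ₁,
        pr p (fun ω => μ₁ ω = l₁ ∧ μ₂ ω = l ∧ b ω = 0)
        = pr p (fun ω => μ₂ ω = l ∧ b ω = 0) := by
      calc ∑ l₁ ∈ Finset.univ.image μ₁, pr p (fun ω => μ₁ ω = l₁ ∧ μ₂ ω = l ∧ b ω = 0)
          = ∑ l₁ ∈ Finset.univ.image μ₁, ∑ ω,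
              (if μ₁ ω = l₁ then (if μ₂ ω = l ∧ b ω = 0 then p ω else 0) else 0) := by
            apply Finset.sum_congr rfl
            intro l₁ _
            rw [pr]
            apply Finset.sum_congr rfl
            intro ω _
            split_ifs <;> first | rfl | tauto
        _ = ∑ ω, (if μ₂ ω = l ∧ b ω = 0 then p ω else 0) := (fiber μ₁ _).symm
        _ = pr p (fun ω => μ₂ ω = l ∧ b ω = 0) := by
            rw [pr]
            apply Finset.sum_congr rfl
            intro ω _
            split_ifs <;> first | rfl | tauto
    rw [step1, Finset.sum_congr rfl (fun l₁ _ => (hdag l₁ l).symm), step2, hsym₂ l 0, pr]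
    congr 1
    apply Finset.sum_congr rfl
    intro ω _
    split_ifs <;> rfl
  -- key inequality
  have key : ∑ ω, p ω * (2 * (μ₁ ω 0 - μ₂ ω 0) ^ 2 + Real.binEntropy (μ₁ ω 0))
      ≤ ∑ ω, p ω * Real.binEntropy (μ₂ ω 0) := by
    rw [fiber μ₂ (fun ω => p ω * (2 * (μ₁ ω 0 - μ₂ ω 0) ^ 2 + Real.binEntropy (μ₁ ω 0))),
      fiber μ₂ (fun ω => p ω * Real.binEntropy (μ₂ ω 0))]
    apply Finset.sum_le_sum
    intro l hl
    obtain ⟨ω₀, _, hω₀⟩ := Finset.mem_image.1 hl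
    have hl0 : 0 ≤ l 0 := by rw [← hω₀]; exact hμ₂0 ω₀ 0
    have hl1 : l 0 ≤ 1 := by rw [← hω₀]; exact hq2b ω₀
    set w : Ω → ℝ := fun ω => if μ₂ ω = l then p ω else 0 with hw
    have hwnn : ∀ ω ∈ Finset.univ, 0 ≤ w ω := by
      intro ω _; rw [hw]; dsimp only; split <;> simp [hp ω]
    have hme : ∑ ω, w ω * μ₁ ω 0 = l 0 * ∑ ω, w ω := by
      have e : ∑ ω, w ω * μ₁ ω 0 = ∑ ω, (if μ₂ ω = l then p ω * μ₁ ω 0 else 0) :=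
        Finset.sum_congr rfl (fun ω _ => by
          rw [hw]; dsimp only; by_cases h : μ₂ ω = l <;> simp [h])
      rw [e, hmean l]
    calc ∑ ω, (if μ₂ ω = l then p ω * (2 * (μ₁ ω 0 - μ₂ ω 0) ^ 2
            + Real.binEntropy (μ₁ ω 0)) else 0)
        = ∑ ω, w ω * (2 * (μ₁ ω 0 - l 0) ^ 2 + Real.binEntropy (μ₁ ω 0)) := by
          apply Finset.sum_congr rfl
          intro ω _
          rw [hw]; dsimp only
          by_cases h : μ₂ ω = l <;> simp [h]
      _ ≤ (∑ ω, w ω) * Real.binEntropy (l 0) :=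
          grouped Finset.univ w (fun ω => μ₁ ω 0) (l 0) hwnn
            (fun ω _ => hμ₁0 ω 0) (fun ω _ => hq1b ω) hl0 hl1 hme
      _ = ∑ ω, (if μ₂ ω = l then p ω * Real.binEntropy (μ₂ ω 0) else 0) := by
          rw [Finset.sum_mul]
          apply Finset.sum_congr rfl
          intro ω _
          rw [hw]; dsimp only
          by_cases h : μ₂ ω = l <;> simp [h]
  -- final conversion to base-2 entropy
  have hlog2 : (0:ℝ) < Real.log 2 := Real.log_pos (by norm_num)
  have hbe : ∀ x : ℝ, binEnt x = Real.binEntropy x / Real.log 2 := by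
    intro x
    rw [binEnt, Real.binEntropy, Real.log_inv, Real.log_inv, Real.logb, Real.logb]
    ring
  have e1 : ∑ ω, p ω * binEnt (μ₁ ω 0)
      = (∑ ω, p ω * Real.binEntropy (μ₁ ω 0)) / Real.log 2 := by
    rw [Finset.sum_div]
    exact Finset.sum_congr rfl (fun ω _ => by rw [hbe]; ring)
  have e2 : ∑ ω, p ω * binEnt (μ₂ ω 0)
      = (∑ ω, p ω * Real.binEntropy (μ₂ ω 0)) / Real.log 2 := by
    rw [Finset.sum_div]
    exact Finset.sum_congr rfl (fun ω _ => by rw [hbe]; ring)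
  have expand : ∑ ω, p ω * (2 * (μ₁ ω 0 - μ₂ ω 0) ^ 2 + Real.binEntropy (μ₁ ω 0))
      = 2 * (∑ ω, p ω * (μ₁ ω 0 - μ₂ ω 0) ^ 2) + ∑ ω, p ω * Real.binEntropy (μ₁ ω 0) := by
    rw [Finset.mul_sum, ← Finset.sum_add_distrib]
    exact Finset.sum_congr rfl (fun ω _ => by ring)
  rw [e1, e2]
  set A := ∑ ω, p ω * (μ₁ ω 0 - μ₂ ω 0) ^ 2
  set B₁ := ∑ ω, p ω * Real.binEntropy (μ₁ ω 0)
  set B₂ := ∑ ω, p ω * Real.binEntropy (μ₂ ω 0)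
  have hk : 2 * A + B₁ ≤ B₂ := by rw [← expand]; exact key
  have hrhs : Real.log 2 / 2 * ((1 - B₁ / Real.log 2) - (1 - B₂ / Real.log 2))
      = (B₂ - B₁) / 2 := by
    field_simp
    ring
  rw [hrhs]
  linarith
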